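/- arXiv:2510.22478 — 3 statements merged into one kernel-verified Lean document; each statement's English description precedes it below -/
import Mathlib

section
/- Let d ≥ 2 and 0 < α' < π/2, and let C(α') = {y ∈ ℝ^d \ {0} : angle(y, e₁) ≤ α'/2} be the solid cone about the e₁-axis with apex angle α'. Fix x ∈ C(α'). Then there exists M = M(x, α') > 0 such that for all y, y' ∈ C(α') with ‖y - x‖ ≥ M and ‖y' - x‖ ≥ M, the angle between the vectors y - x and y' - x is at most 2^{10} · α'. -/
open MeasureTheory

section AuxChord

open InnerProductGeometry Real

variable {V : Type*} [NormedAddCommGroup V] [InnerProductSpace ℝ V]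

private lemma chord_eq_two_sin_half (u v : V) (hu : u ≠ 0) (hv : v ≠ 0) :
    ‖‖u‖⁻¹ • u - ‖v‖⁻¹ • v‖ = 2 * Real.sin (angle u v / 2) := by
  have hnu : (0:ℝ) < ‖u‖ := norm_pos_iff.mpr hu
  have hnv : (0:ℝ) < ‖v‖ := norm_pos_iff.mpr hv
  have h1 : ‖‖u‖⁻¹ • u‖ = 1 := by
    rw [norm_smul, norm_inv, norm_norm, inv_mul_cancel₀ hnu.ne']
  have h2 : ‖‖v‖⁻¹ • v‖ = 1 := by
    rw [norm_smul, norm_inv, norm_norm, inv_mul_cancel₀ hnv.ne']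
  have hinner : (inner ℝ (‖u‖⁻¹ • u) (‖v‖⁻¹ • v) : ℝ) = Real.cos (angle u v) := by
    rw [real_inner_smul_left, real_inner_smul_right, cos_angle]
    field_simp
  have hsq : ‖‖u‖⁻¹ • u - ‖v‖⁻¹ • v‖ ^ 2 = (2 * Real.sin (angle u v / 2)) ^ 2 := by
    rw [norm_sub_sq_real, h1, h2, hinner]
    have := Real.sin_sq_eq_half_sub (angle u v / 2)
    have h2x : 2 * (angle u v / 2) = angle u v := by ring
    rw [h2x] at this
    nlinarith
  have hs : 0 ≤ Real.sin (angle u v / 2) :=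
    Real.sin_nonneg_of_nonneg_of_le_pi (by linarith [angle_nonneg u v])
      (by linarith [angle_le_pi u v, Real.pi_pos])
  calc ‖‖u‖⁻¹ • u - ‖v‖⁻¹ • v‖ = Real.sqrt (‖‖u‖⁻¹ • u - ‖v‖⁻¹ • v‖ ^ 2) :=
        (Real.sqrt_sq (norm_nonneg _)).symm
    _ = Real.sqrt ((2 * Real.sin (angle u v / 2)) ^ 2) := by rw [hsq]
    _ = 2 * Real.sin (angle u v / 2) := Real.sqrt_sq (by linarith)

private lemma chord_le_angle (u v : V) (hu : u ≠ 0) (hv : v ≠ 0) :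
    ‖‖u‖⁻¹ • u - ‖v‖⁻¹ • v‖ ≤ angle u v := by
  rw [chord_eq_two_sin_half u v hu hv]
  have := Real.sin_le (x := angle u v / 2) (by linarith [angle_nonneg u v])
  linarith

private lemma angle_le_chord (u v : V) (hu : u ≠ 0) (hv : v ≠ 0) :
    angle u v ≤ Real.pi / 2 * ‖‖u‖⁻¹ • u - ‖v‖⁻¹ • v‖ := by
  rw [chord_eq_two_sin_half u v hu hv]
  have h1 := Real.mul_le_sin (x := angle u v / 2) (by linarith [angle_nonneg u v])
    (by linarith [angle_le_pi u v])
  have hpi := Real.pi_pos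
  have : 2 / Real.pi * (angle u v / 2) * (Real.pi / 2) ≤
      Real.sin (angle u v / 2) * (Real.pi / 2) :=
    mul_le_mul_of_nonneg_right h1 (by positivity)
  calc angle u v = 2 / Real.pi * (angle u v / 2) * (Real.pi / 2) * 2 := by
        field_simp
    _ ≤ Real.sin (angle u v / 2) * (Real.pi / 2) * 2 := by nlinarith
    _ = Real.pi / 2 * (2 * Real.sin (angle u v / 2)) := by ring

/-- If `cos β ≤ cos θ` with `θ, β ∈ [0, π]` then `θ ≤ β`. -/
private lemma angle_le_of_cos_le {θ β : ℝ} (hθ0 : 0 ≤ θ) (hθπ : θ ≤ Real.pi)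
    (hβ0 : 0 ≤ β) (hβπ : β ≤ Real.pi) (h : Real.cos β ≤ Real.cos θ) : θ ≤ β := by
  by_contra hlt
  push_neg at hlt
  exact absurd (Real.strictAntiOn_cos ⟨hβ0, hβπ⟩ ⟨hθ0, hθπ⟩ hlt) (not_lt.mpr h)

end AuxChord

/-- The first standard basis vector of `ℝ^d`. -/
noncomputable def e1 (d : ℕ) : EuclideanSpace ℝ (Fin d) :=
  WithLp.toLp 2 (fun (j : Fin d) => if (j : ℕ) = 0 then (1 : ℝ) else 0)

/-- The solid cone about the `e₁` axis with apex angle `α'`. -/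
def cone (d : ℕ) (α' : ℝ) : Set (EuclideanSpace ℝ (Fin d)) :=
  {y | y ≠ 0 ∧ InnerProductGeometry.angle y (e1 d) ≤ α' / 2}

private lemma e1_ne_zero (d : ℕ) (hd : 2 ≤ d) : e1 d ≠ 0 := by
  intro h
  have h0 : e1 d ⟨0, by omega⟩ = 0 := by rw [h]; rfl
  simp [e1] at h0

/-- Cone-angle lemma: far from a fixed point `x` of a thin cone, any two points of the
cone are seen from `x` within a small angle. -/
theorem cone_angle_lemma (d : ℕ) (hd : 2 ≤ d) (α' : ℝ) (hα0 : 0 < α')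
    (hαπ : α' < Real.pi / 2) (x : EuclideanSpace ℝ (Fin d)) (hx : x ∈ cone d α') :
    ∃ M : ℝ, 0 < M ∧ ∀ y ∈ cone d α', ∀ y' ∈ cone d α',
      M ≤ ‖y - x‖ → M ≤ ‖y' - x‖ →
      InnerProductGeometry.angle (y - x) (y' - x) ≤ 2 ^ 10 * α' := by
  have hpi := Real.pi_pos
  set a : ℝ := ‖x‖ with ha
  set c : ℝ := Real.cos α' with hc
  have hc0 : 0 < c := Real.cos_pos_of_mem_Ioo ⟨by linarith, hαπ⟩
  have hc1 : c < 1 := by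
    have := Real.strictAntiOn_cos (a := 0) (b := α') ⟨le_refl _, by linarith⟩
      ⟨hα0.le, by linarith⟩ hα0
    simpa using this
  have hM0 : (0:ℝ) < a * (1 + c) / (1 - c) + 1 := by
    have h := div_nonneg (by positivity : (0:ℝ) ≤ a * (1 + c))
      (by linarith : (0:ℝ) ≤ 1 - c)
    linarith
  refine ⟨a * (1 + c) / (1 - c) + 1, hM0, ?_⟩
  intro y hy y' hy' hMy hMy'
  -- key : any far cone point subtends angle ≤ α' between y - x and y
  have key : ∀ z : EuclideanSpace ℝ (Fin d), z ∈ cone d α' →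
      a * (1 + c) / (1 - c) + 1 ≤ ‖z - x‖ →
      InnerProductGeometry.angle (z - x) z ≤ α' := by
    intro z hz hM
    set r : ℝ := ‖z - x‖ with hr
    have hr0 : 0 < r := lt_of_lt_of_le hM0 hM
    have hzx : z - x ≠ 0 := by
      intro h; rw [hr, h, norm_zero] at hr0; exact lt_irrefl 0 hr0
    have hfrac : c * (r + a) ≤ r - a := by
      have h1 : a * (1 + c) / (1 - c) * (1 - c) = a * (1 + c) :=
        div_mul_cancel₀ _ (by linarith : (1:ℝ) - c ≠ 0)
      have h2 : (a * (1 + c) / (1 - c) + 1) * (1 - c) ≤ r * (1 - c) :=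
        mul_le_mul_of_nonneg_right hM (by linarith)
      nlinarith
    have hinner : r * (r - a) ≤ (inner ℝ (z - x) z : ℝ) := by
      have : (inner ℝ (z - x) z : ℝ) = ‖z - x‖ ^ 2 + (inner ℝ (z - x) x : ℝ) := by
        calc (inner ℝ (z - x) z : ℝ) = (inner ℝ (z - x) ((z - x) + x) : ℝ) := by
              rw [sub_add_cancel]
          _ = ‖z - x‖ ^ 2 + (inner ℝ (z - x) x : ℝ) := by
              rw [inner_add_right, real_inner_self_eq_norm_sq]
      rw [this]
      have habs := abs_real_inner_le_norm (z - x) x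
      have : -(r * a) ≤ (inner ℝ (z - x) x : ℝ) := by
        rw [hr]
        nlinarith [abs_le.mp habs]
      nlinarith
    have hnz : ‖z‖ ≤ r + a := by
      calc ‖z‖ = ‖(z - x) + x‖ := by rw [sub_add_cancel]
        _ ≤ ‖z - x‖ + ‖x‖ := norm_add_le _ _
    have hz0 : (0:ℝ) < ‖z‖ := norm_pos_iff.mpr hz.1
    have hcos : c ≤ Real.cos (InnerProductGeometry.angle (z - x) z) := by
      rw [InnerProductGeometry.cos_angle]
      rw [le_div_iff₀ (by positivity)]
      calc c * (‖z - x‖ * ‖z‖) ≤ c * (r * (r + a)) := by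
            apply mul_le_mul_of_nonneg_left _ hc0.le
            rw [← hr]
            exact mul_le_mul_of_nonneg_left hnz hr0.le
        _ = r * (c * (r + a)) := by ring
        _ ≤ r * (r - a) := mul_le_mul_of_nonneg_left hfrac hr0.le
        _ ≤ _ := hinner
    exact angle_le_of_cos_le (InnerProductGeometry.angle_nonneg _ _)
      (InnerProductGeometry.angle_le_pi _ _) hα0.le (by linarith) hcos
  -- chord estimates
  have he1 : e1 d ≠ 0 := e1_ne_zero d hd
  have hry : (0:ℝ) < ‖y - x‖ := lt_of_lt_of_le hM0 hMy
  have hry' : (0:ℝ) < ‖y' - x‖ := lt_of_lt_of_le hM0 hMy'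
  have hyx : y - x ≠ 0 := by intro h; rw [h, norm_zero] at hry; exact lt_irrefl 0 hry
  have hy'x : y' - x ≠ 0 := by intro h; rw [h, norm_zero] at hry'; exact lt_irrefl 0 hry'
  set p := ‖y - x‖⁻¹ • (y - x) with hp
  set q := ‖y‖⁻¹ • y with hq
  set e := ‖e1 d‖⁻¹ • (e1 d) with he
  set q' := ‖y'‖⁻¹ • y' with hq'
  set p' := ‖y' - x‖⁻¹ • (y' - x) with hp'
  have c1 : ‖p - q‖ ≤ α' := (chord_le_angle _ _ hyx hy.1).trans (key y hy hMy)
  have c2 : ‖q - e‖ ≤ α' / 2 := (chord_le_angle _ _ hy.1 he1).trans hy.2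
  have c3 : ‖e - q'‖ ≤ α' / 2 := by
    rw [norm_sub_rev]
    exact (chord_le_angle _ _ hy'.1 he1).trans hy'.2
  have c4 : ‖q' - p'‖ ≤ α' := by
    rw [norm_sub_rev]
    exact (chord_le_angle _ _ hy'x hy'.1).trans (key y' hy' hMy')
  have chord_tri : ‖p - p'‖ ≤ 3 * α' := by
    calc ‖p - p'‖ = ‖(p - q) + (q - e) + (e - q') + (q' - p')‖ := by abel_nf
      _ ≤ ‖(p - q) + (q - e) + (e - q')‖ + ‖q' - p'‖ := norm_add_le _ _
      _ ≤ ‖(p - q) + (q - e)‖ + ‖e - q'‖ + ‖q' - p'‖ := by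
          gcongr; exact norm_add_le _ _
      _ ≤ ‖p - q‖ + ‖q - e‖ + ‖e - q'‖ + ‖q' - p'‖ := by
          gcongr; exact norm_add_le _ _
      _ ≤ α' + α' / 2 + α' / 2 + α' := by gcongr
      _ = 3 * α' := by ring
  have := angle_le_chord (y - x) (y' - x) hyx hy'x
  have hpi4 : Real.pi ≤ 4 := by linarith [Real.pi_le_four]
  calc InnerProductGeometry.angle (y - x) (y' - x)
      ≤ Real.pi / 2 * ‖p - p'‖ := this
    _ ≤ Real.pi / 2 * (3 * α') := by
        apply mul_le_mul_of_nonneg_left chord_tri (by positivity)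
    _ ≤ 2 ^ 10 * α' := by nlinarith
end

section
/- Let k ≥ 3 and let V = {p₁, …, p_k} ⊆ ℝ^d (d ≥ 2) be a k-point set containing no three collinear points. Then there exists a set E ⊆ ℝ^d with positive upper density such that for every x ∈ E there is R(x) > 0 with the property: for every r > R(x) there is no isometry O ∈ O(d) with x + r·O(V) ⊆ E. Equivalently, the pinned scaling factor set D_x^V(E) := {r > 0 : ∃ O ∈ O(d), x + r·O(V) ⊆ E} is bounded for every x ∈ E. -/
open MeasureTheory Filter ENNReal

set_option maxHeartbeats 1000000

lemma coord_le_norm {d : ℕ} (i : Fin d) (y : EuclideanSpace ℝ (Fin d)) : |y i| ≤ ‖y‖ := by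
  rw [EuclideanSpace.norm_eq]
  have h : |y i| = Real.sqrt (|y i|^2) := by rw [Real.sqrt_sq_eq_abs, abs_abs]
  rw [h]
  apply Real.sqrt_le_sqrt
  have := Finset.single_le_sum (f := fun j => ‖y j‖^2) (fun j _ => by positivity) (Finset.mem_univ i)
  simpa using this

lemma tail_norm_le {d : ℕ} (i₀ : Fin d) (y c : EuclideanSpace ℝ (Fin d)) (hc : ∀ j ≠ i₀, c j = 0) :
    ‖y - (y i₀) • EuclideanSpace.single i₀ (1:ℝ)‖ ≤ ‖y - c‖ := by
  rw [EuclideanSpace.norm_eq, EuclideanSpace.norm_eq]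
  apply Real.sqrt_le_sqrt
  apply Finset.sum_le_sum
  intro j _
  by_cases hj : j = i₀
  · subst hj
    have h0 : (y - y j • EuclideanSpace.single j (1:ℝ)) j = 0 := by
      simp [PiLp.sub_apply, PiLp.smul_apply, EuclideanSpace.single_apply]
    rw [h0]
    simpa using sq_nonneg ‖(y - c) j‖
  · simp [PiLp.sub_apply, PiLp.smul_apply, EuclideanSpace.single_apply, hj, hc j hj]

lemma key_calc (r γ t d12 d13 d23 s1 s2 s3 : ℝ) (hr : 0 ≤ r)
    (hγ1 : γ ≤ d12 + d23 - d13) (hγ2 : γ ≤ d12 + d13 - d23) (hγ3 : γ ≤ d13 + d23 - d12)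
    (h12a : r * d12 ≤ |s1 - s2| + 2*t) (h12b : |s1 - s2| ≤ r * d12)
    (h13a : r * d13 ≤ |s1 - s3| + 2*t) (h13b : |s1 - s3| ≤ r * d13)
    (h23a : r * d23 ≤ |s2 - s3| + 2*t) (h23b : |s2 - s3| ≤ r * d23) :
    r * γ ≤ 4 * t := by
  have m1 : r * γ ≤ r * d12 + r * d23 - r * d13 := by
    nlinarith [mul_le_mul_of_nonneg_left hγ1 hr]
  have m2 : r * γ ≤ r * d12 + r * d13 - r * d23 := by
    nlinarith [mul_le_mul_of_nonneg_left hγ2 hr]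
  have m3 : r * γ ≤ r * d13 + r * d23 - r * d12 := by
    nlinarith [mul_le_mul_of_nonneg_left hγ3 hr]
  rcases abs_cases (s1-s2) with ⟨e12, _⟩|⟨e12,_⟩ <;>
  rcases abs_cases (s1-s3) with ⟨e13, _⟩|⟨e13,_⟩ <;>
  rcases abs_cases (s2-s3) with ⟨e23, _⟩|⟨e23,_⟩ <;>
  rw [e12] at h12a h12b <;> rw [e13] at h13a h13b <;> rw [e23] at h23a h23b <;>
  linarith


/-- Upper density of a subset of `ℝ^d`. -/
noncomputable def upperDensity (d : ℕ) (S : Set (EuclideanSpace ℝ (Fin d))) : ℝ :=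
  limsup (fun R : ℝ => (volume (S ∩ Metric.ball 0 R)).toReal / R ^ d) atTop

/-- Theorem 1 (avoidance): for every `k`-point pattern `V` with no three collinear
points there is a set `E` of positive upper density such that, for every `x ∈ E`,
all sufficiently large pinned affine (isometric) copies of `V` based at `x` avoid `E`;
i.e. the pinned scaling factor set is bounded at every pin. -/
theorem pattern_avoidance (d k : ℕ) (hd : 2 ≤ d) (hk : 3 ≤ k)
    (V : Set (EuclideanSpace ℝ (Fin d))) (hVfin : V.Finite) (hVcard : V.ncard = k)
    (hVnocol : ∀ p ∈ V, ∀ q ∈ V, ∀ s ∈ V, p ≠ q → p ≠ s → q ≠ s →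
      ¬ Collinear ℝ ({p, q, s} : Set (EuclideanSpace ℝ (Fin d)))) :
    ∃ E : Set (EuclideanSpace ℝ (Fin d)), 0 < upperDensity d E ∧
      ∀ x ∈ E, ∃ R : ℝ, 0 < R ∧ ∀ r : ℝ, R < r →
        ∀ O : EuclideanSpace ℝ (Fin d) ≃ₗᵢ[ℝ] EuclideanSpace ℝ (Fin d),
          ¬ (∀ v ∈ V, x + r • O v ∈ E) := by
  classical
  -- three distinct points of V
  obtain ⟨v₁, hv₁⟩ : V.Nonempty := Set.nonempty_of_ncard_ne_zero (by omega)
  obtain ⟨v₂, hv₂V, hv₂ne⟩ : ∃ v₂ ∈ V, v₂ ∉ ({v₁} : Set _) := by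
    by_contra h
    push_neg at h
    have := Set.ncard_le_ncard h (Set.finite_singleton v₁)
    simp [Set.ncard_singleton] at this
    omega
  obtain ⟨v₃, hv₃V, hv₃ne⟩ : ∃ v₃ ∈ V, v₃ ∉ ({v₁, v₂} : Set _) := by
    by_contra h
    push_neg at h
    have h1 := Set.ncard_le_ncard h (Set.toFinite _)
    have h2 : ({v₁, v₂} : Set (EuclideanSpace ℝ (Fin d))).ncard ≤ 2 := by
      refine le_trans (Set.ncard_insert_le _ _) ?_
      simp [Set.ncard_singleton]
    omega
  have h12 : v₁ ≠ v₂ := by simp at hv₂ne; exact fun h => hv₂ne h.symm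
  simp only [Set.mem_insert_iff, Set.mem_singleton_iff, not_or] at hv₃ne
  have h13 : v₁ ≠ v₃ := fun h => hv₃ne.1 h.symm
  have h23 : v₂ ≠ v₃ := fun h => hv₃ne.2 h.symm
  -- strict triangle inequality constants
  have tri : ∀ a b c : EuclideanSpace ℝ (Fin d), dist a c ≤ dist a b + dist b c :=
    fun a b c => dist_triangle a b c
  have hg1 : 0 < dist v₁ v₂ + dist v₂ v₃ - dist v₁ v₃ := by
    rcases lt_or_eq_of_le (tri v₁ v₂ v₃) with h | h
    · linarith
    · exact absurd ((dist_add_dist_eq_iff).mp h.symm).collinear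
        (hVnocol v₁ hv₁ v₂ hv₂V v₃ hv₃V h12 h13 h23)
  have hg2 : 0 < dist v₁ v₂ + dist v₁ v₃ - dist v₂ v₃ := by
    rcases lt_or_eq_of_le (tri v₂ v₁ v₃) with h | h
    · rw [dist_comm v₂ v₁] at h; linarith
    · refine absurd ((dist_add_dist_eq_iff).mp h.symm).collinear
        (hVnocol v₂ hv₂V v₁ hv₁ v₃ hv₃V h12.symm h23 h13)
  have hg3 : 0 < dist v₁ v₃ + dist v₂ v₃ - dist v₁ v₂ := by
    rcases lt_or_eq_of_le (tri v₁ v₃ v₂) with h | h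
    · rw [dist_comm v₃ v₂] at h; linarith
    · refine absurd ((dist_add_dist_eq_iff).mp h.symm).collinear
        (hVnocol v₁ hv₁ v₃ hv₃V v₂ hv₂V h13 h12 h23.symm)
  set γ : ℝ := min (dist v₁ v₂ + dist v₂ v₃ - dist v₁ v₃)
      (min (dist v₁ v₂ + dist v₁ v₃ - dist v₂ v₃) (dist v₁ v₃ + dist v₂ v₃ - dist v₁ v₂))
      with hγdef
  have hγ0 : 0 < γ := lt_min hg1 (lt_min hg2 hg3)
  have hγa : γ ≤ dist v₁ v₂ + dist v₂ v₃ - dist v₁ v₃ := min_le_left _ _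
  have hγb : γ ≤ dist v₁ v₂ + dist v₁ v₃ - dist v₂ v₃ :=
    le_trans (min_le_right _ _) (min_le_left _ _)
  have hγc : γ ≤ dist v₁ v₃ + dist v₂ v₃ - dist v₁ v₂ :=
    le_trans (min_le_right _ _) (min_le_right _ _)
  set M : ℝ := ‖v₁‖ + ‖v₂‖ + ‖v₃‖ + 1 with hMdef
  have hM0 : 0 < M := by positivity
  have hMv : ∀ v ∈ ({v₁, v₂, v₃} : Set _), ‖v‖ ≤ M := by
    intro v hv
    rcases hv with rfl | rfl | rfl
    · have := norm_nonneg v₂; have := norm_nonneg v₃; simp only [hMdef]; linarith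
    · have := norm_nonneg v₁; have := norm_nonneg v₃; simp only [hMdef]; linarith
    · have := norm_nonneg v₁; have := norm_nonneg v₂; simp only [hMdef]; linarith
  set ε : ℝ := min (1/2) (γ / (16 * M)) with hεdef
  have hε0 : 0 < ε := lt_min (by norm_num) (by positivity)
  have hεhalf : ε ≤ 1/2 := min_le_left _ _
  have hεM : 16 * ε * M ≤ γ := by
    have h2 : ε ≤ γ / (16 * M) := min_le_right _ _
    have h3 : ε * (16 * M) ≤ (γ / (16 * M)) * (16 * M) :=
      mul_le_mul_of_nonneg_right h2 (by positivity)
    have h4 : (γ / (16 * M)) * (16 * M) = γ := by field_simp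
    nlinarith
  -- the construction
  have hd0 : 0 < d := by omega
  set i₀ : Fin d := ⟨0, hd0⟩ with hi₀def
  set e₁ : EuclideanSpace ℝ (Fin d) := EuclideanSpace.single i₀ (1:ℝ) with he₁def
  have he₁ : ‖e₁‖ = 1 := by rw [he₁def, EuclideanSpace.norm_single]; norm_num
  set cc : ℕ → EuclideanSpace ℝ (Fin d) := fun n => ((4:ℝ)^n) • e₁ with hccdef
  have hcc_norm : ∀ n, ‖cc n‖ = 4^n := by
    intro n
    rw [hccdef]
    simp only [norm_smul, he₁, mul_one, Real.norm_eq_abs]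
    exact abs_of_nonneg (by positivity)
  have hcc_coord : ∀ n, ∀ j, j ≠ i₀ → cc n j = 0 := by
    intro n j hj
    simp [hccdef, he₁def, PiLp.smul_apply, EuclideanSpace.single_apply, hj]
  set E : Set (EuclideanSpace ℝ (Fin d)) :=
    ⋃ n : ℕ, Metric.ball (cc n) (ε * 4^n) with hEdef
  have hEn : ∀ n, Metric.ball (cc n) (ε * 4^n) ⊆ E := by
    intro n; rw [hEdef]
    exact Set.subset_iUnion (fun m => Metric.ball (cc m) (ε * 4^m)) n
  refine ⟨E, ?_, ?_⟩
  · -- positive upper density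
    set B1 : ℝ≥0∞ := volume (Metric.ball (0 : EuclideanSpace ℝ (Fin d)) 1) with hB1def
    have hB1pos : 0 < B1 := Metric.measure_ball_pos _ _ one_pos
    have hB1fin : B1 < ⊤ := measure_ball_lt_top
    have hB1tR : 0 < B1.toReal := ENNReal.toReal_pos hB1pos.ne' hB1fin.ne
    have hvol_ball : ∀ (z : EuclideanSpace ℝ (Fin d)) (ρ : ℝ), 0 < ρ →
        volume (Metric.ball z ρ) = ENNReal.ofReal (ρ ^ d) * B1 := by
      intro z ρ hρ
      rw [hB1def, Measure.addHaar_ball_of_pos volume z hρ, finrank_euclideanSpace_fin]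
    set c0 : ℝ := (ε/(1+ε))^d * B1.toReal with hc0def
    have hc0 : 0 < c0 := by
      apply mul_pos _ hB1tR
      apply pow_pos
      apply div_pos hε0
      linarith
    have hbdd : IsBoundedUnder (· ≤ ·) atTop
        (fun R : ℝ => (volume (E ∩ Metric.ball 0 R)).toReal / R ^ d) := by
      apply isBoundedUnder_of_eventually_le (a := B1.toReal)
      filter_upwards [eventually_ge_atTop (1:ℝ)] with R hR
      have hR0 : 0 < R := lt_of_lt_of_le one_pos hR
      have h1 : volume (E ∩ Metric.ball 0 R) ≤ ENNReal.ofReal (R ^ d) * B1 := by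
        rw [← hvol_ball 0 R hR0]
        exact measure_mono Set.inter_subset_right
      have h2 : (volume (E ∩ Metric.ball 0 R)).toReal ≤ R ^ d * B1.toReal := by
        have hfin : ENNReal.ofReal (R ^ d) * B1 ≠ ⊤ := by
          exact ENNReal.mul_ne_top ENNReal.ofReal_ne_top hB1fin.ne
        calc (volume (E ∩ Metric.ball 0 R)).toReal
            ≤ (ENNReal.ofReal (R ^ d) * B1).toReal := ENNReal.toReal_mono hfin h1
          _ = R ^ d * B1.toReal := by
              rw [ENNReal.toReal_mul, ENNReal.toReal_ofReal (by positivity)]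
      rw [div_le_iff₀ (by positivity)]
      linarith [h2]
    have hfreq : ∃ᶠ R in (atTop : Filter ℝ), c0 ≤
        (volume (E ∩ Metric.ball 0 R)).toReal / R ^ d := by
      have hseq : Tendsto (fun n : ℕ => (1+ε) * 4^n) atTop atTop := by
        apply Tendsto.const_mul_atTop (by linarith : (0:ℝ) < 1+ε)
        exact tendsto_pow_atTop_atTop_of_one_lt (by norm_num)
      apply hseq.frequently
      apply Frequently.of_forall
      intro n
      have h4n : (0:ℝ) < 4^n := by positivity
      have hsub : Metric.ball (cc n) (ε * 4^n) ⊆ E ∩ Metric.ball 0 ((1+ε) * 4^n) := by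
        intro y hy
        refine ⟨hEn n hy, ?_⟩
        rw [Metric.mem_ball] at hy ⊢
        calc dist y 0 ≤ dist y (cc n) + dist (cc n) 0 := dist_triangle _ _ _
          _ < ε * 4^n + 4^n := by
              rw [dist_zero_right, hcc_norm n]; linarith [hy]
          _ ≤ (1+ε) * 4^n := by ring_nf; linarith
      have hlow : ENNReal.ofReal ((ε * 4^n) ^ d) * B1 ≤ volume (E ∩ Metric.ball 0 ((1+ε) * 4^n)) := by
        rw [← hvol_ball (cc n) (ε * 4^n) (by positivity)]
        exact measure_mono hsub
      have hfin2 : volume (E ∩ Metric.ball 0 ((1+ε) * 4^n)) < ⊤ :=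
        lt_of_le_of_lt (measure_mono Set.inter_subset_right) measure_ball_lt_top
      have hlowR : (ε * 4^n) ^ d * B1.toReal ≤
          (volume (E ∩ Metric.ball 0 ((1+ε) * 4^n))).toReal := by
        have := ENNReal.toReal_mono hfin2.ne hlow
        rwa [ENNReal.toReal_mul, ENNReal.toReal_ofReal (by positivity)] at this
      have hden : (0:ℝ) < ((1+ε) * 4^n) ^ d := by positivity
      rw [hc0def, le_div_iff₀ hden]
      calc (ε/(1+ε))^d * B1.toReal * ((1+ε) * 4^n) ^ d
          = (ε * 4^n) ^ d * B1.toReal := by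
            rw [div_pow, mul_pow, mul_pow]
            field_simp
        _ ≤ _ := hlowR
    exact lt_of_lt_of_le hc0 (le_limsup_of_frequently_le hfreq hbdd)
  · -- avoidance
    intro x hx
    obtain ⟨n, hn⟩ : ∃ n, x ∈ Metric.ball (cc n) (ε * 4^n) := Set.mem_iUnion.mp hx
    have h4n : (0:ℝ) < 4^n := by positivity
    have hR0 : 0 < 32*ε*(4:ℝ)^n/γ + 1 := by
      have : 0 ≤ 32*ε*(4:ℝ)^n/γ := div_nonneg (by positivity) hγ0.le
      linarith
    refine ⟨32*ε*(4:ℝ)^n/γ + 1, hR0, ?_⟩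
    intro r hrR O hO
    have hr0 : 0 < r := lt_trans hR0 hrR
    -- the three pattern points
    set p : EuclideanSpace ℝ (Fin d) → EuclideanSpace ℝ (Fin d) :=
      fun v => x + r • O v with hpdef
    have hp1 : p v₁ ∈ E := hO v₁ hv₁
    have hp2 : p v₂ ∈ E := hO v₂ hv₂V
    have hp3 : p v₃ ∈ E := hO v₃ hv₃V
    -- norm of x
    have hxnorm : ‖x‖ ≤ 2 * 4^n := by
      rw [Metric.mem_ball] at hn
      calc ‖x‖ = dist x 0 := (dist_zero_right x).symm
        _ ≤ dist x (cc n) + dist (cc n) 0 := dist_triangle _ _ _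
        _ ≤ ε * 4^n + 4^n := by rw [dist_zero_right, hcc_norm n]; linarith [hn]
        _ ≤ 2 * 4^n := by
              have := mul_le_mul_of_nonneg_right (hεhalf.trans (by norm_num : (1:ℝ)/2 ≤ 1)) h4n.le
              linarith
    -- the common bound T
    set T : ℝ := ε * (4 * 4^n + 2 * r * M) with hTdef
    -- per-point facts
    have hpoint : ∀ v ∈ ({v₁, v₂, v₃} : Set _), p v ∈ E →
        ‖p v - (p v i₀) • e₁‖ ≤ T := by
      intro v hv hpE
      obtain ⟨m, hm⟩ : ∃ m, p v ∈ Metric.ball (cc m) (ε * 4^m) := Set.mem_iUnion.mp hpE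
      rw [Metric.mem_ball, dist_eq_norm] at hm
      have h4m : (0:ℝ) < 4^m := by positivity
      -- upper bound for 4^m
      have hup : ‖p v‖ ≤ 2 * 4^n + r * M := by
        have h1 : ‖p v‖ ≤ ‖x‖ + ‖r • O v‖ := by
          rw [hpdef]; exact norm_add_le _ _
        have h2 : ‖r • O v‖ = r * ‖v‖ := by
          rw [norm_smul, Real.norm_eq_abs, abs_of_pos hr0, O.norm_map]
        have h3 : ‖v‖ ≤ M := hMv v hv
        nlinarith [hxnorm]
      have hlow : (4:ℝ)^m ≤ 2 * ‖p v‖ := by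
        have h1 : ‖cc m‖ ≤ ‖cc m - p v‖ + ‖p v‖ := by
          calc ‖cc m‖ = ‖(cc m - p v) + p v‖ := by rw [sub_add_cancel]
            _ ≤ ‖cc m - p v‖ + ‖p v‖ := norm_add_le _ _
        rw [hcc_norm m, norm_sub_rev] at h1
        nlinarith [hεhalf, h4m, hm]
      have h4mT : (4:ℝ)^m ≤ 4 * 4^n + 2 * r * M := by nlinarith
      have := tail_norm_le i₀ (p v) (cc m) (hcc_coord m)
      rw [← he₁def] at this
      calc ‖p v - (p v i₀) • e₁‖ ≤ ‖p v - cc m‖ := this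
        _ ≤ ε * 4^m := hm.le
        _ ≤ T := by rw [hTdef]; nlinarith [hε0]
    have hq1 := hpoint v₁ (by simp) hp1
    have hq2 := hpoint v₂ (by simp) hp2
    have hq3 := hpoint v₃ (by simp) hp3
    -- pairwise bounds
    have hT0 : 0 ≤ T := by
      have : ‖p v₁ - (p v₁ i₀) • e₁‖ ≥ 0 := norm_nonneg _
      linarith [hq1]
    have hpair : ∀ a b : EuclideanSpace ℝ (Fin d),
        ‖p a - (p a i₀) • e₁‖ ≤ T → ‖p b - (p b i₀) • e₁‖ ≤ T →
        (r * dist a b ≤ |p a i₀ - p b i₀| + 2*T ∧ |p a i₀ - p b i₀| ≤ r * dist a b) := by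
      intro a b hqa hqb
      have hsub : p a - p b = r • (O a - O b) := by
        rw [hpdef]; simp only [smul_sub]; abel
      have hdist : ‖p a - p b‖ = r * dist a b := by
        rw [hsub, norm_smul, Real.norm_eq_abs, abs_of_pos hr0, ← map_sub, O.norm_map,
          dist_eq_norm]
      constructor
      · have hdecomp : p a - p b =
            (p a i₀ - p b i₀) • e₁ + ((p a - (p a i₀) • e₁) - (p b - (p b i₀) • e₁)) := by
          rw [sub_smul]; abel
        calc r * dist a b = ‖p a - p b‖ := hdist.symm
          _ ≤ ‖(p a i₀ - p b i₀) • e₁‖ +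
              ‖(p a - (p a i₀) • e₁) - (p b - (p b i₀) • e₁)‖ := by
              rw [hdecomp]; exact norm_add_le _ _
          _ ≤ |p a i₀ - p b i₀| + 2*T := by
              rw [norm_smul, Real.norm_eq_abs, he₁, mul_one]
              have := norm_sub_le (p a - (p a i₀) • e₁) (p b - (p b i₀) • e₁)
              linarith
      · have hcoord : (p a - p b) i₀ = p a i₀ - p b i₀ := by
          simp [PiLp.sub_apply]
        calc |p a i₀ - p b i₀| = |(p a - p b) i₀| := by rw [hcoord]
          _ ≤ ‖p a - p b‖ := coord_le_norm i₀ _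
          _ = r * dist a b := hdist
    obtain ⟨h12a, h12b⟩ := hpair v₁ v₂ hq1 hq2
    obtain ⟨h13a, h13b⟩ := hpair v₁ v₃ hq1 hq3
    obtain ⟨h23a, h23b⟩ := hpair v₂ v₃ hq2 hq3
    have hkey : r * γ ≤ 4 * T :=
      key_calc r γ T (dist v₁ v₂) (dist v₁ v₃) (dist v₂ v₃)
        (p v₁ i₀) (p v₂ i₀) (p v₃ i₀) hr0.le hγa hγb hγc h12a h12b h13a h13b h23a h23b
    -- final contradiction
    clear_value T E cc e₁ ε M γ
    have h8 : 8 * ε * (r * M) ≤ r * γ / 2 := by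
      nlinarith [mul_le_mul_of_nonneg_left hεM hr0.le]
    have h9 : r * γ ≤ 32 * ε * 4^n := by
      have hT4 : (4:ℝ) * T = 16 * ε * 4^n + 8 * ε * (r * M) := by rw [hTdef]; ring
      rw [hT4] at hkey
      linarith [hkey, h8]
    have h10 : 32 * ε * (4:ℝ)^n < r * γ := by
      have h11 : 32*ε*(4:ℝ)^n/γ < r := by linarith [hrR]
      calc 32 * ε * (4:ℝ)^n = (32*ε*(4:ℝ)^n/γ) * γ := by field_simp
        _ < r * γ := by exact mul_lt_mul_of_pos_right h11 hγ0
    linarith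
end

section
/- Let N ≥ 2 and suppose r(N) is an upper bound for the size of any subset of ℤ/Nℤ containing no (k−1)-term arithmetic progression. If E ⊆ ℝ/2πℤ is measurable and for every x ∈ ℝ/2πℤ and every i ∈ {1,…,N−1} the set {x + j·2πi/N : j = 0,…,k−2} is not contained in E (with N prime so these points are distinct), then L¹(E) ≤ (2π/N)·r(N). -/
open MeasureTheory
open scoped ENNReal

instance : Fact (0 < 2 * Real.pi) := ⟨by positivity⟩

/-- If `r N` bounds the size of subsets of `ℤ/Nℤ` with no `(k−1)`-term arithmetic
progression, and `E ⊆ ℝ/2πℤ` avoids all `(k−1)`-term progressions with gaps which are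
multiples of `2π/N`, then `L¹(E) ≤ (2π/N)·r N`. -/
theorem avoid_ap_measure_general (k N : ℕ) (hk : 3 ≤ k) (hN : 2 ≤ N)
    (hprime : Nat.Prime N) (r : ℕ)
    (hr : ∀ B : Finset (ZMod N),
      (¬ ∃ a δ : ZMod N, δ ≠ 0 ∧
        Function.Injective (fun j : Fin (k - 1) => a + (j : ℕ) • δ) ∧
        ∀ j : Fin (k - 1), a + (j : ℕ) • δ ∈ B) →
      B.card ≤ r)
    (E : Set (AddCircle (2 * Real.pi))) (hE : MeasurableSet E)
    (havoid : ∀ x : AddCircle (2 * Real.pi), ∀ i : ℕ, 1 ≤ i → i ≤ N - 1 →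
      ¬ (∀ j : ℕ, j ≤ k - 2 →
        x + (j : ℕ) • ((2 * Real.pi * i / N : ℝ) : AddCircle (2 * Real.pi)) ∈ E)) :
    volume E ≤ ENNReal.ofReal (2 * Real.pi / N * r) := by
  classical
  have hπ : (0:ℝ) < 2 * Real.pi := by positivity
  haveI : NeZero N := ⟨by omega⟩
  have hNR : (0:ℝ) < (N:ℝ) := by exact_mod_cast (by omega : 0 < N)
  set c : ℝ := 2 * Real.pi / N with hc
  have hc0 : 0 < c := by positivity
  have hNc : (N : ℝ) * c = 2 * Real.pi := by rw [hc]; field_simp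
  -- the additive homomorphism from `ZMod N` to the circle
  have hker : (zmultiplesHom (AddCircle (2 * Real.pi))
      ((c : ℝ) : AddCircle (2 * Real.pi))) (N : ℤ) = 0 := by
    show (N : ℤ) • ((c : ℝ) : AddCircle (2 * Real.pi)) = 0
    rw [← AddCircle.coe_zsmul]
    have h1 : (N : ℤ) • c = 2 * Real.pi := by
      rw [zsmul_eq_mul]; push_cast; exact hNc
    rw [h1, AddCircle.coe_period]
  set φ : ZMod N →+ AddCircle (2 * Real.pi) :=
    ZMod.lift N ⟨zmultiplesHom _ (((c : ℝ)) : AddCircle (2 * Real.pi)), hker⟩ with hφdef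
  have hφn : ∀ m : ℕ, φ (m : ZMod N) = (((m : ℝ) * c : ℝ) : AddCircle (2 * Real.pi)) := by
    intro m
    have h1 : ((m : ℤ) : ZMod N) = (m : ZMod N) := by push_cast; rfl
    rw [← h1, hφdef, ZMod.lift_coe]
    show (m : ℤ) • ((c : ℝ) : AddCircle (2 * Real.pi)) = _
    rw [← AddCircle.coe_zsmul, zsmul_eq_mul]
    push_cast
    ring_nf
  have hφ : ∀ t : ZMod N, φ t = (((t.val : ℝ) * c : ℝ) : AddCircle (2 * Real.pi)) := by
    intro t
    conv_lhs => rw [← ZMod.natCast_rightInverse t]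
    exact hφn t.val
  -- key cardinality claim
  have key : ∀ x : ℝ,
      ((Finset.range N).filter
        (fun t : ℕ => ((x + (t:ℝ) * c : ℝ) : AddCircle (2 * Real.pi)) ∈ E)).card ≤ r := by
    intro x
    set B : Finset (ZMod N) :=
      Finset.univ.filter (fun t : ZMod N =>
        (((x + (t.val : ℝ) * c : ℝ)) : AddCircle (2 * Real.pi)) ∈ E) with hB
    have hcard : ((Finset.range N).filter
        (fun t : ℕ => ((x + (t:ℝ) * c : ℝ) : AddCircle (2 * Real.pi)) ∈ E)).card = B.card := by
      apply Finset.card_bij (fun t _ => ((t : ℕ) : ZMod N))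
      · intro t ht
        simp only [Finset.mem_filter, Finset.mem_range] at ht
        simp only [hB, Finset.mem_filter, Finset.mem_univ, true_and]
        rw [ZMod.val_cast_of_lt ht.1]
        exact ht.2
      · intro a ha b hb hab
        simp only [Finset.mem_filter, Finset.mem_range] at ha hb
        have := congrArg ZMod.val hab
        rwa [ZMod.val_cast_of_lt ha.1, ZMod.val_cast_of_lt hb.1] at this
      · intro t ht
        simp only [hB, Finset.mem_filter, Finset.mem_univ, true_and] at ht
        refine ⟨t.val, ?_, ZMod.natCast_rightInverse t⟩
        simp only [Finset.mem_filter, Finset.mem_range]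
        exact ⟨ZMod.val_lt t, ht⟩
    rw [hcard]
    apply hr
    rintro ⟨a, δ, hδ, hinj, hmem⟩
    have hvpos : 1 ≤ δ.val :=
      Nat.pos_of_ne_zero (fun h => hδ ((ZMod.val_eq_zero δ).mp h))
    have hvlt : δ.val ≤ N - 1 := by have := ZMod.val_lt δ; omega
    refine havoid ((x : AddCircle (2 * Real.pi)) + φ a) δ.val hvpos hvlt ?_
    intro j hj
    have hjk : j < k - 1 := by omega
    have h2 := hmem ⟨j, hjk⟩
    simp only [hB, Finset.mem_filter, Finset.mem_univ, true_and] at h2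
    have h3 : (2 * Real.pi * (δ.val : ℝ) / N : ℝ) = (δ.val : ℝ) * c := by rw [hc]; ring
    have heq : (x : AddCircle (2 * Real.pi)) + φ a +
        (j : ℕ) • ((2 * Real.pi * (δ.val : ℝ) / N : ℝ) : AddCircle (2 * Real.pi))
        = ((x + (((a + (j : ℕ) • δ).val : ℝ)) * c : ℝ) : AddCircle (2 * Real.pi)) := by
      rw [h3, ← hφ δ, ← map_nsmul, add_assoc, ← map_add, hφ, ← AddCircle.coe_add]
    rw [heq]
    exact h2
  -- measure computation
  set F : Set ℝ := ((↑·) : ℝ → AddCircle (2 * Real.pi)) ⁻¹' E with hFdef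
  have hF : MeasurableSet F := AddCircle.measurable_mk' hE
  set A : ℕ → Set ℝ := fun t => (fun x => x + t * c) ⁻¹' F with hA
  have hAmeas : ∀ t, MeasurableSet (A t) := fun t =>
    hF.preimage (measurable_add_const _)
  -- step 1: volume E = volume (F ∩ Ioc 0 (2π))
  have step1 : volume E = volume (F ∩ Set.Ioc (0:ℝ) (0 + 2 * Real.pi)) :=
    AddCircle.add_projection_respects_measure (T := 2 * Real.pi) 0 hE
  -- step 2: covering
  have cover : F ∩ Set.Ioc (0:ℝ) (0 + 2 * Real.pi) ⊆
      ⋃ t ∈ Finset.range N, F ∩ Set.Ioc ((t:ℝ) * c) (((t:ℝ) + 1) * c) := by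
    rintro x ⟨hxF, hx0, hx2π⟩
    set t : ℕ := ⌈x / c⌉₊ - 1 with ht
    have hxc : 0 < x / c := div_pos (by linarith) hc0
    have hceil : 1 ≤ ⌈x / c⌉₊ := Nat.one_le_ceil_iff.mpr hxc
    have hceilN : ⌈x / c⌉₊ ≤ N := by
      apply Nat.ceil_le.mpr
      rw [div_le_iff₀ hc0]
      calc x ≤ 2 * Real.pi := by linarith
        _ = (N:ℝ) * c := hNc.symm
    have htN : t < N := by omega
    have htc : ((t:ℝ)) = (⌈x / c⌉₊ : ℝ) - 1 := by
      rw [ht]; push_cast [hceil]; ring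
    refine Set.mem_biUnion (Finset.mem_range.mpr htN) ⟨hxF, ?_, ?_⟩
    · rw [htc]
      have : (⌈x / c⌉₊ : ℝ) < x / c + 1 := Nat.ceil_lt_add_one hxc.le
      calc ((⌈x / c⌉₊ : ℝ) - 1) * c < (x / c) * c := by
            apply mul_lt_mul_of_pos_right _ hc0; linarith
        _ = x := div_mul_cancel₀ x hc0.ne'
    · rw [htc]
      have : x / c ≤ (⌈x / c⌉₊ : ℝ) := Nat.le_ceil _
      calc x = (x / c) * c := (div_mul_cancel₀ x hc0.ne').symm
        _ ≤ (⌈x / c⌉₊ : ℝ) * c := by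
            apply mul_le_mul_of_nonneg_right this hc0.le
        _ = ((⌈x / c⌉₊ : ℝ) - 1 + 1) * c := by ring_nf
  -- step 3: translate pieces
  have piece : ∀ t : ℕ, volume (F ∩ Set.Ioc ((t:ℝ) * c) (((t:ℝ) + 1) * c))
      = volume (A t ∩ Set.Ioc (0:ℝ) c) := by
    intro t
    rw [← measure_preimage_add_right volume ((t:ℝ) * c)
      (F ∩ Set.Ioc ((t:ℝ) * c) (((t:ℝ) + 1) * c))]
    congr 1
    ext x
    simp only [Set.mem_preimage, Set.mem_inter_iff, Set.mem_Ioc, hA]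
    constructor
    · rintro ⟨h1, h2, h3⟩; exact ⟨h1, by linarith, by linarith⟩
    · rintro ⟨h1, h2, h3⟩; exact ⟨h1, by linarith, by linarith⟩
  -- step 4: pieces as integrals of indicators
  have step4 : ∀ t : ℕ, volume (A t ∩ Set.Ioc (0:ℝ) c)
      = ∫⁻ x in Set.Ioc (0:ℝ) c, (A t).indicator (1 : ℝ → ℝ≥0∞) x := by
    intro t
    rw [lintegral_indicator_one (hAmeas t), Measure.restrict_apply (hAmeas t)]
  -- combine
  calc volume E = volume (F ∩ Set.Ioc (0:ℝ) (0 + 2 * Real.pi)) := step1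
    _ ≤ ∑ t ∈ Finset.range N, volume (F ∩ Set.Ioc ((t:ℝ) * c) (((t:ℝ) + 1) * c)) := by
        refine le_trans (measure_mono cover) ?_
        exact measure_biUnion_finset_le _ _
    _ = ∑ t ∈ Finset.range N,
        ∫⁻ x in Set.Ioc (0:ℝ) c, (A t).indicator (1 : ℝ → ℝ≥0∞) x := by
        refine Finset.sum_congr rfl fun t _ => ?_
        rw [piece t, step4 t]
    _ = ∫⁻ x in Set.Ioc (0:ℝ) c,
        ∑ t ∈ Finset.range N, (A t).indicator (1 : ℝ → ℝ≥0∞) x := by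
        rw [lintegral_finset_sum]
        intro t _
        exact (measurable_const.indicator (hAmeas t))
    _ ≤ ∫⁻ x in Set.Ioc (0:ℝ) c, (r : ℝ≥0∞) := by
        refine lintegral_mono fun x => ?_
        have : ∑ t ∈ Finset.range N, (A t).indicator (1 : ℝ → ℝ≥0∞) x
            = (((Finset.range N).filter (fun t : ℕ => x ∈ A t)).card : ℝ≥0∞) := by
          rw [Finset.card_filter]
          push_cast
          refine Finset.sum_congr rfl fun t _ => ?_
          by_cases h : x ∈ A t <;> simp [h]
        rw [this]
        have hx := key x
        have hsame : ((Finset.range N).filter (fun t => x ∈ A t))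
            = (Finset.range N).filter
              (fun t : ℕ => ((x + (t:ℝ) * c : ℝ) : AddCircle (2 * Real.pi)) ∈ E) := by
          refine Finset.filter_congr fun t _ => ?_
          simp [hA, hFdef]
        rw [hsame]
        exact Nat.mono_cast hx
    _ = (r : ℝ≥0∞) * volume (Set.Ioc (0:ℝ) c) := by
        rw [setLIntegral_const]
    _ = ENNReal.ofReal (c * (r:ℝ)) := by
        rw [Real.volume_Ioc, sub_zero, ← ENNReal.ofReal_natCast r,
          ← ENNReal.ofReal_mul (by positivity)]
        congr 1
        ring
end
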